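/- Let A, B, C be real numbers and B(+1), B(−1) > 0 with A ≥ C². The 2×2 real symmetric matrix M with diagonal entries M_{++} = −(1/√3)·C/√(B(+1)), M_{−−} = +(1/√3)·C/√(B(−1)), and off-diagonal entries M_{+−} = M_{−+} = −(1/√3)·√(A−C²)·(1/2)(1/√(B(+1)) + 1/√(B(−1))) has eigenvalues λ_± = ±(1/√3)·[ (√A ∓ C)/(2√(B(+1))) + (√A ± C)/(2√(B(−1))) ]. -/

import Mathlib

lemma aux_eig_of_det (M : Matrix (Fin 2) (Fin 2) ℝ) (μ : ℝ)
    (h : (algebraMap ℝ (Matrix (Fin 2) (Fin 2) ℝ) μ - M).det = 0) :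
    Module.End.HasEigenvalue (Matrix.toLin' M) μ := by
  rw [Module.End.hasEigenvalue_iff_mem_spectrum]
  have : Matrix.toLin' M = Matrix.toLinAlgEquiv (Pi.basisFun ℝ (Fin 2)) M := rfl
  rw [this, AlgEquiv.spectrum_eq, spectrum.mem_iff, Matrix.isUnit_iff_isUnit_det, h]
  simp

/-- Eigenvalues of the 2×2 symmetric matrix of the cosine operator on the
two-dimensional intertwiner space. -/
theorem stmt_4 (A C Bp Bm : ℝ) (hAC : C ^ 2 ≤ A) (hBp : 0 < Bp) (hBm : 0 < Bm)
    (M : Matrix (Fin 2) (Fin 2) ℝ)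
    (hM : M = !![-(1 / Real.sqrt 3) * C / Real.sqrt Bp,
        -(1 / Real.sqrt 3) * Real.sqrt (A - C ^ 2) *
          ((1 / 2) * (1 / Real.sqrt Bp) + (1 / 2) * (1 / Real.sqrt Bm));
        -(1 / Real.sqrt 3) * Real.sqrt (A - C ^ 2) *
          ((1 / 2) * (1 / Real.sqrt Bp) + (1 / 2) * (1 / Real.sqrt Bm)),
        (1 / Real.sqrt 3) * C / Real.sqrt Bm]) :
    Module.End.HasEigenvalue (Matrix.toLin' M)
      ((1 / Real.sqrt 3) *
        ((Real.sqrt A - C) / (2 * Real.sqrt Bp) + (Real.sqrt A + C) / (2 * Real.sqrt Bm))) ∧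
    Module.End.HasEigenvalue (Matrix.toLin' M)
      (-(1 / Real.sqrt 3) *
        ((Real.sqrt A + C) / (2 * Real.sqrt Bp) + (Real.sqrt A - C) / (2 * Real.sqrt Bm))) := by
  have hp : (0:ℝ) < Real.sqrt Bp := Real.sqrt_pos.mpr hBp
  have hm : (0:ℝ) < Real.sqrt Bm := Real.sqrt_pos.mpr hBm
  have ht : (0:ℝ) < Real.sqrt 3 := Real.sqrt_pos.mpr (by norm_num)
  have ht2 : Real.sqrt 3 ^ 2 = 3 := Real.sq_sqrt (by norm_num)
  have hs2 : Real.sqrt (A - C ^ 2) ^ 2 = A - C ^ 2 := Real.sq_sqrt (by linarith)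
  have hA0 : (0:ℝ) ≤ A := le_trans (sq_nonneg C) hAC
  have hr2 : Real.sqrt A ^ 2 = A := Real.sq_sqrt hA0
  set p := Real.sqrt Bp
  set m := Real.sqrt Bm
  set t := Real.sqrt 3
  set s := Real.sqrt (A - C ^ 2)
  set r := Real.sqrt A
  constructor <;>
  · apply aux_eig_of_det
    subst hM
    rw [Matrix.det_fin_two]
    simp only [Matrix.sub_apply, Matrix.algebraMap_matrix_apply, Matrix.cons_val', Matrix.cons_val_zero,
      Matrix.cons_val_one, Matrix.head_cons, Matrix.head_fin_const, Matrix.empty_val',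
      Matrix.cons_val_fin_one, if_true, if_false, Fin.zero_eq_one_iff, Fin.one_eq_zero_iff]
    norm_num
    field_simp
    linear_combination ((m+p)^2) * (hr2 - hs2)
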